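/- (Fan's minimax theorem, Borwein–Zhuang form.) Let X be a nonempty compact topological space, Y a nonempty set, and K : X × Y → ℝ a convex-concave like function such that for every y ∈ Y the map x ↦ K(x, y) is lower semicontinuous on X. Then min_{x ∈ X} sup_{y ∈ Y} K(x, y) = sup_{y ∈ Y} min_{x ∈ X} K(x, y), and in particular the minima on both sides are attained. -/

import Mathlib

/-- A real-valued function `K : X → Y → ℝ` on arbitrary sets `X`, `Y` (no vector space
structure required) is *convex-concave like* if for every `t ∈ [0,1]`: (a) for all `x₁, x₂`
there is `x₃` with `K x₃ y ≤ t * K x₁ y + (1−t) * K x₂ y` for all `y`; and (b) for all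
`y₁, y₂` there is `y₃` with `t * K x y₁ + (1−t) * K x y₂ ≤ K x y₃` for all `x`. -/
def ConvexConcaveLike {X Y : Type*} (K : X → Y → ℝ) : Prop :=
  ∀ t : ℝ, 0 ≤ t → t ≤ 1 →
    (∀ x₁ x₂ : X, ∃ x₃ : X, ∀ y : Y, K x₃ y ≤ t * K x₁ y + (1 - t) * K x₂ y) ∧
    (∀ y₁ y₂ : Y, ∃ y₃ : Y, ∀ x : X, t * K x y₁ + (1 - t) * K x y₂ ≤ K x y₃)



open Finset

lemma lsc_min {X : Type*} [TopologicalSpace X] [CompactSpace X] [Nonempty X]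
    {h : X → ℝ} (hh : LowerSemicontinuous h) : ∃ x₀ : X, ∀ x, h x₀ ≤ h x := by
  by_contra hc
  push_neg at hc
  have hcl : ∀ c : X, IsClosed {x | h x ≤ h c} := fun c => by
    have he : {x | h x ≤ h c} = (h ⁻¹' Set.Ioi (h c))ᶜ := by
      ext x; simp [not_lt]
    rw [he]
    exact (hh.isOpen_preimage (h c)).isClosed_compl
  have hemp : (Set.univ : Set X) ∩ ⋂ c : X, {x | h x ≤ h c} = ∅ := by
    ext x
    simp only [Set.mem_inter_iff, Set.mem_iInter, Set.mem_empty_iff_false, iff_false,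
      Set.mem_univ, true_and, Set.mem_setOf_eq]
    intro hx
    obtain ⟨x', hx'⟩ := hc x
    exact absurd (hx x') (not_le.2 hx')
  obtain ⟨T, hT⟩ := isCompact_univ.elim_finite_subfamily_closed _ hcl hemp
  rcases T.eq_empty_or_nonempty with rfl | hne
  · simp only [Finset.notMem_empty, Set.iInter_of_empty, Set.iInter_univ, Set.inter_univ] at hT
    exact (Set.univ_eq_empty_iff.mp hT).elim (Classical.arbitrary X)
  · obtain ⟨c, hcT, hmin⟩ := T.exists_min_image h hne
    have hcmem : c ∈ (Set.univ : Set X) ∩ ⋂ c' ∈ T, {x | h x ≤ h c'} := by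
      refine ⟨trivial, ?_⟩
      simp only [Set.mem_iInter, Set.mem_setOf_eq]
      intro c' hc'
      exact hmin c' hc'
    rw [hT] at hcmem
    exact hcmem

lemma concave_comb {X Y : Type*} (K : X → Y → ℝ) (hK : ConvexConcaveLike K) :
    ∀ (n : ℕ) (w : Fin n → ℝ), (∀ i, 0 ≤ w i) → (∑ i, w i = 1) → ∀ ys : Fin n → Y,
      ∃ y' : Y, ∀ x, ∑ i, w i * K x (ys i) ≤ K x y' := by
  intro n
  induction n with
  | zero => intro w _ hsum _; simp at hsum
  | succ n ih =>
    intro w hw hsum ys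
    have hsum' : w 0 + ∑ i : Fin n, w i.succ = 1 := by
      rw [← Fin.sum_univ_succ]; exact hsum
    set s := ∑ i : Fin n, w i.succ with hs
    have hs0 : 0 ≤ s := Finset.sum_nonneg fun i _ => hw _
    by_cases hse : s = 0
    · have ht1 : w 0 = 1 := by rw [← hsum', hse, add_zero]
      have hz : ∀ i : Fin n, w i.succ = 0 := by
        intro i
        have := (Finset.sum_eq_zero_iff_of_nonneg (fun i _ => hw (Fin.succ i))).1 hse
        exact this i (Finset.mem_univ i)
      refine ⟨ys 0, fun x => ?_⟩
      rw [Fin.sum_univ_succ]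
      have hzero : ∑ i : Fin n, w i.succ * K x (ys i.succ) = 0 :=
        Finset.sum_eq_zero fun i _ => by rw [hz i, zero_mul]
      rw [hzero, ht1, one_mul, add_zero]
    · have hspos : 0 < s := lt_of_le_of_ne hs0 (Ne.symm hse)
      obtain ⟨y1, hy1⟩ := ih (fun i => w i.succ / s) (fun i => div_nonneg (hw _) hs0)
        (by rw [← Finset.sum_div, ← hs, div_self hse]) (fun i => ys i.succ)
      have ht0 : 0 ≤ w 0 := hw 0
      have ht1 : w 0 ≤ 1 := by linarith
      obtain ⟨y', hy'⟩ := (hK (w 0) ht0 ht1).2 (ys 0) y1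
      refine ⟨y', fun x => ?_⟩
      have hst : 1 - w 0 = s := by linarith
      have h1 : ∑ i : Fin n, w i.succ * K x (ys i.succ) ≤ s * K x y1 := by
        have h2 := mul_le_mul_of_nonneg_left (hy1 x) hs0
        calc ∑ i : Fin n, w i.succ * K x (ys i.succ)
            = s * ∑ i : Fin n, w i.succ / s * K x (ys i.succ) := by
              rw [Finset.mul_sum]
              refine Finset.sum_congr rfl fun i _ => ?_
              field_simp
          _ ≤ s * K x y1 := h2
      have h2 := hy' x
      rw [Fin.sum_univ_succ]
      rw [hst] at h2
      linarith

lemma clm_pi_apply {n : ℕ} (f : (Fin n → ℝ) →L[ℝ] ℝ) (z : Fin n → ℝ) :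
    f z = ∑ i, z i * f (Pi.single i 1) := by
  have hz : z = ∑ i : Fin n, z i • (Pi.single i 1 : Fin n → ℝ) := by
    funext j
    simp [Finset.sum_apply, Pi.single_apply, Finset.sum_ite_eq']
  conv_lhs => rw [hz]
  rw [map_sum]
  simp [smul_eq_mul]

/-- K. Fan's minimax theorem, Borwein–Zhuang form.  If `X` is a nonempty
compact topological space, `Y` a nonempty set, `K : X × Y → ℝ` convex-concave like with
`K (·, y)` lower semicontinuous for every `y`, then `min_x sup_y K = sup_y min_x K` (in the
extended reals), and the minima on both sides are attained. -/
theorem fan_minimax {X Y : Type*} [TopologicalSpace X] [CompactSpace X]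
    [Nonempty X] [Nonempty Y]
    (K : X → Y → ℝ) (hK : ConvexConcaveLike K)
    (hlsc : ∀ y : Y, LowerSemicontinuous fun x => K x y) :
    (⨅ x : X, ⨆ y : Y, (K x y : EReal)) = (⨆ y : Y, ⨅ x : X, (K x y : EReal)) ∧
    (∃ x₀ : X, (⨆ y : Y, (K x₀ y : EReal)) = ⨅ x : X, ⨆ y : Y, (K x y : EReal)) ∧
    (∀ y : Y, ∃ x₀ : X, (K x₀ y : EReal) = ⨅ x : X, (K x y : EReal)) := by
  have part3 : ∀ y : Y, ∃ x₀ : X, (K x₀ y : EReal) = ⨅ x : X, (K x y : EReal) := by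
    intro y
    obtain ⟨x₀, hx₀⟩ := lsc_min (hlsc y)
    exact ⟨x₀, le_antisymm (le_iInf fun x => by exact_mod_cast hx₀ x) (iInf_le _ x₀)⟩
  have heasy : (⨆ y : Y, ⨅ x : X, (K x y : EReal)) ≤ ⨅ x : X, ⨆ y : Y, (K x y : EReal) :=
    iSup_iInf_le_iInf_iSup fun y x => (K x y : EReal)
  by_cases htop : (⨆ y : Y, ⨅ x : X, (K x y : EReal)) = ⊤
  · have hinfsup : (⨅ x : X, ⨆ y : Y, (K x y : EReal)) = ⊤ :=
      le_antisymm le_top (htop ▸ heasy)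
    refine ⟨by rw [hinfsup, htop], ⟨Classical.arbitrary X, ?_⟩, part3⟩
    have h2 : (⊤ : EReal) ≤ ⨆ y : Y, (K (Classical.arbitrary X) y : EReal) :=
      hinfsup ▸ iInf_le _ _
    rw [hinfsup]
    exact top_le_iff.mp h2
  · have hbot : (⨆ y : Y, ⨅ x : X, (K x y : EReal)) ≠ ⊥ := by
      obtain ⟨x₀, hx₀⟩ := part3 (Classical.arbitrary Y)
      intro h
      have h1 : (⨅ x : X, (K x (Classical.arbitrary Y) : EReal)) ≤
          ⨆ y : Y, ⨅ x : X, (K x y : EReal) :=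
        le_iSup (f := fun y : Y => ⨅ x : X, (K x y : EReal)) (Classical.arbitrary Y)
      rw [h, le_bot_iff, ← hx₀] at h1
      exact (EReal.coe_ne_bot _) h1
    set β : ℝ := (⨆ y : Y, ⨅ x : X, (K x y : EReal)).toReal with hβdef
    have hcoe : (β : EReal) = ⨆ y : Y, ⨅ x : X, (K x y : EReal) := EReal.coe_toReal htop hbot
    have hmyβ : ∀ y : Y, (⨅ x : X, (K x y : EReal)) ≤ (β : EReal) := fun y => by
      rw [hcoe]; exact le_iSup (f := fun y : Y => ⨅ x : X, (K x y : EReal)) y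
    have key : ∃ x₀ : X, ∀ y : Y, K x₀ y ≤ β := by
      by_contra hc
      push_neg at hc
      have hcl : ∀ y : Y, IsClosed {x : X | K x y ≤ β} := fun y => by
        have he : {x : X | K x y ≤ β} = ((fun x => K x y) ⁻¹' Set.Ioi β)ᶜ := by
          ext x; simp [not_lt]
        rw [he]; exact ((hlsc y).isOpen_preimage β).isClosed_compl
      have hemp : (Set.univ : Set X) ∩ ⋂ y : Y, {x : X | K x y ≤ β} = ∅ := by
        ext x
        simp only [Set.mem_inter_iff, Set.mem_univ, true_and, Set.mem_iInter,
          Set.mem_setOf_eq, Set.mem_empty_iff_false, iff_false]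
        push_neg
        exact hc x
      obtain ⟨S, hS⟩ := isCompact_univ.elim_finite_subfamily_closed _ hcl hemp
      have hSx : ∀ x : X, ∃ y ∈ S, β < K x y := by
        intro x
        by_contra h
        push_neg at h
        have hx : x ∈ (Set.univ : Set X) ∩ ⋂ y ∈ S, {x : X | K x y ≤ β} := by
          refine ⟨trivial, ?_⟩
          simp only [Set.mem_iInter, Set.mem_setOf_eq]
          exact fun y hy => h y hy
        rw [hS] at hx
        exact hx
      obtain ⟨yw, hywS, _⟩ := hSx (Classical.arbitrary X)
      set n := Fintype.card ↥S with hn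
      set e := Fintype.equivFin ↥S with he
      haveI : Nonempty (Fin n) := ⟨e ⟨yw, hywS⟩⟩
      set ys : Fin n → Y := fun i => ((e.symm i : ↥S) : Y) with hys
      have hSx' : ∀ x : X, ∃ i : Fin n, β < K x (ys i) := by
        intro x
        obtain ⟨y, hyS, hy⟩ := hSx x
        refine ⟨e ⟨y, hyS⟩, ?_⟩
        simpa only [hys, Equiv.symm_apply_apply] using hy
      set hfun : X → ℝ := fun x => Finset.univ.sup' Finset.univ_nonempty (fun i => K x (ys i))
        with hhfun
      have hhlsc : LowerSemicontinuous hfun := by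
        rw [lowerSemicontinuous_iff_isOpen_preimage]
        intro c
        have heq : hfun ⁻¹' Set.Ioi c = ⋃ i : Fin n, (fun x => K x (ys i)) ⁻¹' Set.Ioi c := by
          ext x
          simp only [Set.mem_preimage, Set.mem_Ioi, Set.mem_iUnion, hhfun,
            Finset.lt_sup'_iff, Finset.mem_univ, true_and]
        rw [heq]
        exact isOpen_iUnion fun i => (hlsc (ys i)).isOpen_preimage c
      obtain ⟨xm, hxm⟩ := lsc_min hhlsc
      set μ : ℝ := hfun xm with hμdef
      have hβμ : β < μ := by
        obtain ⟨i, hi⟩ := hSx' xm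
        have hle : K xm (ys i) ≤ hfun xm :=
          Finset.le_sup' (fun i => K xm (ys i)) (Finset.mem_univ i)
        exact lt_of_lt_of_le hi hle
      have hμx : ∀ x : X, ∃ i : Fin n, μ ≤ K x (ys i) := by
        intro x
        obtain ⟨i, _, hi⟩ := Finset.exists_mem_eq_sup' Finset.univ_nonempty
          (fun i => K x (ys i))
        exact ⟨i, by rw [← hi]; exact hxm x⟩
      set C : Set (Fin n → ℝ) := {z | ∃ x : X, ∀ i, K x (ys i) ≤ z i} with hC
      set D : Set (Fin n → ℝ) := {z | ∀ i, z i < μ} with hD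
      have hCconv : Convex ℝ C := by
        rintro z ⟨x₁, hx₁⟩ z' ⟨x₂, hx₂⟩ a b ha hb hab
        obtain ⟨x₃, hx₃⟩ := (hK a ha (by linarith)).1 x₁ x₂
        refine ⟨x₃, fun i => ?_⟩
        have h0 := hx₃ (ys i)
        have h1 : a * K x₁ (ys i) ≤ a * z i := mul_le_mul_of_nonneg_left (hx₁ i) ha
        have h2 : (1 - a) * K x₂ (ys i) ≤ (1 - a) * z' i :=
          mul_le_mul_of_nonneg_left (hx₂ i) (by linarith)
        have hb' : b = 1 - a := by linarith
        simp only [Pi.add_apply, Pi.smul_apply, smul_eq_mul]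
        rw [hb']
        linarith
      have hDconv : Convex ℝ D := by
        have heq : D = ⋂ i : Fin n, {z : Fin n → ℝ | z i < μ} := by
          ext z; simp [hD, Set.mem_iInter]
        rw [heq]
        exact convex_iInter fun i => convex_halfSpace_lt ⟨fun _ _ => rfl, fun _ _ => rfl⟩ μ
      have hDopen : IsOpen D := by
        have heq : D = ⋂ i : Fin n, (fun z : Fin n → ℝ => z i) ⁻¹' Set.Iio μ := by
          ext z; simp [hD, Set.mem_iInter]
        rw [heq]
        exact isOpen_iInter_of_finite fun i => isOpen_Iio.preimage (continuous_apply i)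
      have hdisj : Disjoint D C := by
        rw [Set.disjoint_left]
        rintro z hzD ⟨x, hx⟩
        obtain ⟨i, hi⟩ := hμx x
        exact absurd (hzD i) (not_lt.2 (le_trans hi (hx i)))
      obtain ⟨f, u, hfD, hfC⟩ := geometric_hahn_banach_open hDconv hDopen hCconv hdisj
      set lam : Fin n → ℝ := fun i => f (Pi.single i 1) with hlam
      have hconstD : ∀ δ : ℝ, 0 < δ → (fun _ : Fin n => μ - δ) ∈ D := by
        intro δ hδ i
        show μ - δ < μ
        linarith
      have hfconst : ∀ c : ℝ, f (fun _ : Fin n => c) = c * ∑ i, lam i := by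
        intro c
        rw [clm_pi_apply, Finset.mul_sum]
      have hlam0 : ∀ i, 0 ≤ lam i := by
        intro i
        by_contra hneg
        push_neg at hneg
        have hc0D : (fun _ : Fin n => μ - 1) ∈ D := hconstD 1 one_pos
        have hfc0 : f (fun _ : Fin n => μ - 1) < u := hfD _ hc0D
        set c0 : Fin n → ℝ := fun _ : Fin n => μ - 1 with hc0
        set M : ℝ := (u - f c0 + 1) / (-lam i) with hM
        have hMpos : 0 < M := div_pos (by linarith) (by linarith)
        have hwD : (c0 - M • (Pi.single i 1 : Fin n → ℝ)) ∈ D := by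
          intro j
          simp only [Pi.sub_apply, Pi.smul_apply, smul_eq_mul, Pi.single_apply, hc0]
          by_cases hji : j = i
          · rw [if_pos hji]; linarith
          · rw [if_neg hji]; linarith
        have hlt := hfD _ hwD
        rw [map_sub, map_smul, smul_eq_mul] at hlt
        have hfl : f (Pi.single i 1) = lam i := rfl
        rw [hfl] at hlt
        have hne : -lam i ≠ 0 := ne_of_gt (by linarith)
        have hML : M * -lam i = u - f c0 + 1 := by
          rw [hM]; exact div_mul_cancel₀ _ hne
        rw [mul_neg] at hML
        linarith
      have hL0 : 0 ≤ ∑ i, lam i := Finset.sum_nonneg fun i _ => hlam0 i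
      have hLpos : 0 < ∑ i, lam i := by
        rcases eq_or_lt_of_le hL0 with heq | hlt
        · exfalso
          have hall : ∀ i ∈ Finset.univ, lam i = 0 :=
            (Finset.sum_eq_zero_iff_of_nonneg fun i _ => hlam0 i).1 heq.symm
          have hzC : (fun i => K (Classical.arbitrary X) (ys i)) ∈ C :=
            ⟨Classical.arbitrary X, fun i => le_refl _⟩
          have h1 : u ≤ f (fun i => K (Classical.arbitrary X) (ys i)) := hfC _ hzC
          rw [clm_pi_apply] at h1
          have h2 : ∑ i, K (Classical.arbitrary X) (ys i) * f (Pi.single i 1) = 0 :=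
            Finset.sum_eq_zero fun i _ => by
              rw [show f (Pi.single i 1) = lam i from rfl, hall i (Finset.mem_univ i), mul_zero]
          rw [h2] at h1
          have h3 := hfD _ (hconstD 1 one_pos)
          rw [hfconst] at h3
          rw [← heq, mul_zero] at h3
          linarith
        · exact hlt
      have huμ : μ * ∑ i, lam i ≤ u := by
        by_contra hlt
        push_neg at hlt
        set δ : ℝ := (μ * ∑ i, lam i - u) / ∑ i, lam i with hδdef
        have hδ : 0 < δ := div_pos (by linarith) hLpos
        have h1 := hfD _ (hconstD δ hδ)
        rw [hfconst] at h1
        have hδL : δ * ∑ i, lam i = μ * ∑ i, lam i - u := by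
          rw [hδdef]; exact div_mul_cancel₀ _ hLpos.ne'
        have hexp : (μ - δ) * ∑ i, lam i = μ * ∑ i, lam i - δ * ∑ i, lam i := by ring
        linarith
      obtain ⟨y', hy'⟩ := concave_comb K hK n (fun i => lam i / ∑ j, lam j)
        (fun i => div_nonneg (hlam0 i) hL0)
        (by rw [← Finset.sum_div, div_self hLpos.ne']) ys
      have hKy' : ∀ x, μ ≤ K x y' := by
        intro x
        have hzC : (fun i => K x (ys i)) ∈ C := ⟨x, fun i => le_refl _⟩
        have h1 : u ≤ f (fun i => K x (ys i)) := hfC _ hzC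
        rw [clm_pi_apply] at h1
        have h2 : ∑ i, (lam i / ∑ j, lam j) * K x (ys i)
            = (∑ i, K x (ys i) * lam i) / ∑ j, lam j := by
          rw [Finset.sum_div]
          refine Finset.sum_congr rfl fun i _ => ?_
          ring
        have h3 := hy' x
        rw [h2] at h3
        have h4 : μ ≤ (∑ i, K x (ys i) * lam i) / ∑ j, lam j := by
          rw [le_div_iff₀ hLpos]
          exact le_trans huμ h1
        linarith
      have hfin : (μ : EReal) ≤ (β : EReal) := by
        calc (μ : EReal) ≤ ⨅ x : X, (K x y' : EReal) :=
              le_iInf fun x => by exact_mod_cast hKy' x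
          _ ≤ (β : EReal) := hmyβ y'
      exact absurd (EReal.coe_le_coe_iff.1 hfin) (not_le.2 hβμ)
    obtain ⟨x₀, hx₀⟩ := key
    have hsupx₀ : (⨆ y : Y, (K x₀ y : EReal)) ≤ (β : EReal) :=
      iSup_le fun y => by exact_mod_cast hx₀ y
    have h1 : (⨅ x : X, ⨆ y : Y, (K x y : EReal)) ≤ ⨆ y : Y, ⨅ x : X, (K x y : EReal) :=
      le_trans (iInf_le _ x₀) (le_trans hsupx₀ (le_of_eq hcoe))
    have heq : (⨅ x : X, ⨆ y : Y, (K x y : EReal)) = ⨆ y : Y, ⨅ x : X, (K x y : EReal) :=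
      le_antisymm h1 heasy
    refine ⟨heq, ⟨x₀, ?_⟩, part3⟩
    refine le_antisymm ?_ (iInf_le _ x₀)
    rw [heq, ← hcoe]
    exact hsupx₀
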